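/- Let X be a finite homogeneous quandle, and let A, B be finite sets of colorings (functions to X) of two graphs, each with a distinguished vertex, both invariant under post-composition by quandle automorphisms. Then the set of pairs (f, g) ∈ A × B with f(v_A) = g(v_B) has cardinality |A|·|B|/|X|. -/

import Mathlib

/-- For a finite homogeneous quandle `X` and two finite automorphism-invariant
sets of colorings `A`, `B` with distinguished vertices `vA`, `vB`, the number of
pairs `(f, g)` with `f vA = g vB` is `|A|·|B| / |X|`. -/
theorem stmt_6 {X SA SB : Type*} [Fintype X] [DecidableEq X]
    [Fintype SA] [DecidableEq SA] [Fintype SB] [DecidableEq SB]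
    (op : X → X → X)
    (idem : ∀ x, op x x = x)
    (inv : ∀ y, Function.Bijective (fun x => op x y))
    (distrib : ∀ x y z, op (op x y) z = op (op x z) (op y z))
    (homog : ∀ x y : X, ∃ h : X → X, Function.Bijective h ∧
      (∀ a b, h (op a b) = op (h a) (h b)) ∧ h x = y)
    (vA : SA) (vB : SB) (A : Finset (SA → X)) (B : Finset (SB → X))
    (invA : ∀ h : X → X, Function.Bijective h →
      (∀ a b, h (op a b) = op (h a) (h b)) → ∀ f ∈ A, h ∘ f ∈ A)
    (invB : ∀ h : X → X, Function.Bijective h →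
      (∀ a b, h (op a b) = op (h a) (h b)) → ∀ g ∈ B, h ∘ g ∈ B) :
    ((A ×ˢ B).filter (fun p => p.1 vA = p.2 vB)).card
      = A.card * B.card / Fintype.card X := by
  by_cases hX : IsEmpty X
  · have hA : A = ∅ := by
      ext f
      simp only [Finset.notMem_empty, iff_false]
      intro _
      exact hX.elim (f vA)
    simp [hA]
  · have : Nonempty X := not_isEmpty_iff.mp hX
    obtain ⟨x0⟩ := this
    set cA : X → ℕ := fun x => (A.filter (fun f => f vA = x)).card with hcA
    set cB : X → ℕ := fun x => (B.filter (fun g => g vB = x)).card with hcB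
    -- constancy of fibers for A
    have keyA : ∀ x y : X, cA x ≤ cA y := by
      intro x y
      obtain ⟨h, hbij, hhom, hxy⟩ := homog x y
      apply Finset.card_le_card_of_injOn (fun f => h ∘ f)
      · intro f hf
        simp only [Finset.mem_coe, Finset.mem_filter] at hf ⊢
        exact ⟨invA h hbij hhom f hf.1, by simp [hf.2, hxy]⟩
      · intro f _ g _ hfg
        funext s
        exact hbij.1 (congrFun hfg s)
    have keyB : ∀ x y : X, cB x ≤ cB y := by
      intro x y
      obtain ⟨h, hbij, hhom, hxy⟩ := homog x y
      apply Finset.card_le_card_of_injOn (fun g => h ∘ g)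
      · intro g hg
        simp only [Finset.mem_coe, Finset.mem_filter] at hg ⊢
        exact ⟨invB h hbij hhom g hg.1, by simp [hg.2, hxy]⟩
      · intro f _ g _ hfg
        funext s
        exact hbij.1 (congrFun hfg s)
    have constA : ∀ x, cA x = cA x0 := fun x => le_antisymm (keyA x x0) (keyA x0 x)
    have constB : ∀ x, cB x = cB x0 := fun x => le_antisymm (keyB x x0) (keyB x0 x)
    have hAcard : A.card = Fintype.card X * cA x0 := by
      rw [Finset.card_eq_sum_card_fiberwise (f := fun f => f vA) (t := Finset.univ)
        (fun f _ => Finset.mem_univ _)]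
      rw [Finset.sum_congr rfl (fun x _ => constA x)]
      simp [Finset.card_univ, Nat.mul_comm]
    have hBcard : B.card = Fintype.card X * cB x0 := by
      rw [Finset.card_eq_sum_card_fiberwise (f := fun g => g vB) (t := Finset.univ)
        (fun g _ => Finset.mem_univ _)]
      rw [Finset.sum_congr rfl (fun x _ => constB x)]
      simp [Finset.card_univ, Nat.mul_comm]
    have hLHS : ((A ×ˢ B).filter (fun p => p.1 vA = p.2 vB)).card
        = Fintype.card X * (cA x0 * cB x0) := by
      rw [Finset.card_eq_sum_card_fiberwise (f := fun p => p.1 vA) (t := Finset.univ)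
        (fun p _ => Finset.mem_univ _)]
      have : ∀ x : X, (((A ×ˢ B).filter (fun p => p.1 vA = p.2 vB)).filter
          (fun p => p.1 vA = x)).card = cA x * cB x := by
        intro x
        rw [Finset.filter_filter]
        have heq : ((A ×ˢ B).filter (fun p => p.1 vA = p.2 vB ∧ p.1 vA = x))
            = (A.filter (fun f => f vA = x)) ×ˢ (B.filter (fun g => g vB = x)) := by
          ext ⟨f, g⟩
          simp only [Finset.mem_filter, Finset.mem_product]
          constructor
          · rintro ⟨⟨hf, hg⟩, h1, h2⟩
            exact ⟨⟨hf, h2⟩, hg, h2 ▸ h1.symm⟩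
          · rintro ⟨⟨hf, h1⟩, hg, h2⟩
            exact ⟨⟨hf, hg⟩, by rw [h1, h2], h1⟩
        rw [heq, Finset.card_product]
      rw [Finset.sum_congr rfl (fun x _ => this x)]
      rw [Finset.sum_congr rfl (fun x _ => by rw [constA x, constB x])]
      simp [Finset.card_univ, Nat.mul_comm]
    have hXpos : 0 < Fintype.card X := Fintype.card_pos_iff.mpr ⟨x0⟩
    rw [hLHS, hAcard, hBcard]
    rw [Nat.mul_mul_mul_comm]
    rw [Nat.mul_assoc, Nat.mul_div_cancel_left _ hXpos]
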